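/- If X and Z are comonotonic integrable random variables, then the quantile function of X + Z is the sum of the quantile functions of X and Z: Q_{X+Z}(u) = Q_X(u) + Q_Z(u) for almost every u in (0,1). -/

import Mathlib

open MeasureTheory

/-- The (upper) quantile function of a distribution on ℝ. -/
noncomputable def quantile (ν : Measure ℝ) (t : ℝ) : ℝ :=
  sInf {x : ℝ | ν (Set.Iic x) > ENNReal.ofReal t}

/-- The uniform distribution on (0,1). -/
noncomputable def uniform01 : Measure ℝ := volume.restrict (Set.Ioo 0 1)

open Set Filter Topology
open scoped ENNReal

section aux

variable {ν : Measure ℝ}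

lemma quantile_set_nonempty [IsProbabilityMeasure ν] {t : ℝ} (ht : t < 1) :
    {x : ℝ | ν (Set.Iic x) > ENNReal.ofReal t}.Nonempty := by
  have h1 : ENNReal.ofReal t < 1 := ENNReal.ofReal_lt_one.2 ht
  have h2 : Tendsto (fun x : ℝ => ν (Set.Iic x)) atTop (𝓝 (ν Set.univ)) :=
    tendsto_measure_Iic_atTop ν
  rw [measure_univ] at h2
  have h3 : ∀ᶠ x : ℝ in atTop, ENNReal.ofReal t < ν (Set.Iic x) :=
    h2.eventually (eventually_gt_nhds h1)
  obtain ⟨x, hx⟩ := h3.exists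
  exact ⟨x, hx⟩

lemma quantile_set_bddBelow [IsProbabilityMeasure ν] {t : ℝ} (ht : 0 < t) :
    BddBelow {x : ℝ | ν (Set.Iic x) > ENNReal.ofReal t} := by
  have hempty : (⋂ x : ℝ, Set.Iic x) = ∅ := by
    ext y
    simp only [Set.mem_iInter, Set.mem_Iic, Set.mem_empty_iff_false, iff_false, not_forall,
      not_le]
    exact ⟨y - 1, by linarith⟩
  have h0 : Tendsto (fun x : ℝ => ν (Set.Iic x)) atBot (𝓝 0) := by
    have := tendsto_measure_iInter_atBot (μ := ν) (s := fun x : ℝ => Set.Iic x)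
      (fun x => measurableSet_Iic.nullMeasurableSet)
      (fun a b hab => Set.Iic_subset_Iic.2 hab) ⟨0, measure_ne_top ν _⟩
    rw [hempty] at this
    simpa [Function.comp_def] using this
  have hpos : (0 : ℝ≥0∞) < ENNReal.ofReal t := ENNReal.ofReal_pos.2 ht
  have h3 : ∀ᶠ x : ℝ in atBot, ν (Set.Iic x) < ENNReal.ofReal t :=
    h0.eventually (eventually_lt_nhds hpos)
  obtain ⟨x0, hx0⟩ := h3.exists
  refine ⟨x0, fun y hy => ?_⟩
  by_contra hc
  push_neg at hc
  exact absurd hy (not_lt.2 ((measure_mono (Set.Iic_subset_Iic.2 hc.le)).trans hx0.le))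

lemma monotoneOn_quantile [IsProbabilityMeasure ν] :
    MonotoneOn (quantile ν) (Set.Ioo (0:ℝ) 1) := by
  intro a ha b hb hab
  exact csInf_le_csInf (quantile_set_bddBelow ha.1) (quantile_set_nonempty hb.2)
    (fun x hx => lt_of_le_of_lt (ENNReal.ofReal_le_ofReal hab) hx)

lemma quantile_map_uniform (h : ℝ → ℝ) (hm : MonotoneOn h (Set.Ioo 0 1))
    (hmeas : AEMeasurable h uniform01) {t : ℝ} (ht : t ∈ Set.Ioo (0:ℝ) 1) :
    quantile (uniform01.map h) t = sInf (h '' Set.Ioo t 1) := by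
  have hset : {x : ℝ | (uniform01.map h) (Set.Iic x) > ENNReal.ofReal t}
      = {x : ℝ | ∃ u ∈ Set.Ioo t 1, h u ≤ x} := by
    ext x
    simp only [Set.mem_setOf_eq, gt_iff_lt]
    rw [Measure.map_apply_of_aemeasurable hmeas measurableSet_Iic,
      uniform01, Measure.restrict_apply' measurableSet_Ioo]
    constructor
    · intro hx
      by_contra hcon
      push_neg at hcon
      have hsub : h ⁻¹' Set.Iic x ∩ Set.Ioo 0 1 ⊆ Set.Ioc 0 t := by
        rintro v ⟨hv1, hv2⟩
        refine ⟨hv2.1, ?_⟩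
        by_contra hvt
        push_neg at hvt
        exact absurd hv1 (not_le.2 (hcon v ⟨hvt, hv2.2⟩))
      have hle : volume (h ⁻¹' Set.Iic x ∩ Set.Ioo 0 1) ≤ ENNReal.ofReal t := by
        calc volume (h ⁻¹' Set.Iic x ∩ Set.Ioo 0 1) ≤ volume (Set.Ioc 0 t) :=
              measure_mono hsub
          _ = ENNReal.ofReal t := by rw [Real.volume_Ioc, sub_zero]
      exact absurd hx (not_lt.2 hle)
    · rintro ⟨u, hu, hux⟩
      have hu1 : u ∈ Set.Ioo (0:ℝ) 1 := ⟨ht.1.trans hu.1, hu.2⟩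
      have hsub : Set.Ioo 0 u ⊆ h ⁻¹' Set.Iic x ∩ Set.Ioo 0 1 := by
        intro v hv
        have hv1 : v ∈ Set.Ioo (0:ℝ) 1 := ⟨hv.1, hv.2.trans hu.2⟩
        exact ⟨le_trans (hm hv1 hu1 hv.2.le) hux, hv1⟩
      calc ENNReal.ofReal t < ENNReal.ofReal u :=
            (ENNReal.ofReal_lt_ofReal_iff (ht.1.trans hu.1)).2 hu.1
        _ = volume (Set.Ioo 0 u) := by rw [Real.volume_Ioo, sub_zero]
        _ ≤ volume (h ⁻¹' Set.Iic x ∩ Set.Ioo 0 1) := measure_mono hsub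
  have himg_ne : (h '' Set.Ioo t 1).Nonempty := (Set.nonempty_Ioo.2 ht.2).image h
  have hlb : ∀ y ∈ h '' Set.Ioo t 1, h t ≤ y := by
    rintro y ⟨u, hu, rfl⟩
    exact hm ht ⟨ht.1.trans hu.1, hu.2⟩ hu.1.le
  have hbddS : BddBelow {x : ℝ | ∃ u ∈ Set.Ioo t 1, h u ≤ x} := by
    refine ⟨h t, ?_⟩
    rintro x ⟨u, hu, hux⟩
    exact le_trans (hlb _ (Set.mem_image_of_mem h hu)) hux
  have hSne : {x : ℝ | ∃ u ∈ Set.Ioo t 1, h u ≤ x}.Nonempty := by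
    obtain ⟨u, hu⟩ := Set.nonempty_Ioo.2 ht.2
    exact ⟨h u, u, hu, le_rfl⟩
  unfold quantile
  rw [hset]
  apply le_antisymm
  · refine le_csInf himg_ne ?_
    rintro y ⟨u, hu, rfl⟩
    exact csInf_le hbddS ⟨u, hu, le_rfl⟩
  · refine le_csInf hSne ?_
    rintro x ⟨u, hu, hux⟩
    exact le_trans (csInf_le ⟨h t, hlb⟩ (Set.mem_image_of_mem h hu)) hux

end aux

/-- if X and Z are comonotonic integrable random variables
(X = Q_X(U), Z = Q_Z(U) a.s. for a common uniform U on (0,1)), then the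
quantile function of X + Z equals Q_X + Q_Z for almost every u ∈ (0,1). -/
theorem stmt_7 {Ω : Type*} [MeasurableSpace Ω] (P : Measure Ω) [IsProbabilityMeasure P]
    (X Z U : Ω → ℝ) (hX : Measurable X) (hZ : Measurable Z) (hU : Measurable U)
    (hXi : Integrable X P) (hZi : Integrable Z P)
    (hUlaw : P.map U = uniform01)
    (hXcom : ∀ᵐ ω ∂P, X ω = quantile (P.map X) (U ω))
    (hZcom : ∀ᵐ ω ∂P, Z ω = quantile (P.map Z) (U ω)) :
    ∀ᵐ u ∂uniform01,
      quantile (P.map (fun ω => X ω + Z ω)) u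
        = quantile (P.map X) u + quantile (P.map Z) u := by
  haveI : IsProbabilityMeasure (P.map X) := Measure.isProbabilityMeasure_map hX.aemeasurable
  haveI : IsProbabilityMeasure (P.map Z) := Measure.isProbabilityMeasure_map hZ.aemeasurable
  set f : ℝ → ℝ := quantile (P.map X) with hf
  set g : ℝ → ℝ := quantile (P.map Z) with hg
  set h : ℝ → ℝ := fun t => f t + g t with hh
  have hfm : MonotoneOn f (Set.Ioo 0 1) := monotoneOn_quantile
  have hgm : MonotoneOn g (Set.Ioo 0 1) := monotoneOn_quantile
  have hhm : MonotoneOn h (Set.Ioo 0 1) := fun a ha b hb hab =>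
    add_le_add (hfm ha hb hab) (hgm ha hb hab)
  have hhmeas : AEMeasurable h uniform01 :=
    aemeasurable_restrict_of_monotoneOn measurableSet_Ioo hhm
  have hcomp : (fun ω => X ω + Z ω) =ᵐ[P] (h ∘ U) := by
    filter_upwards [hXcom, hZcom] with ω h1 h2
    simp only [Function.comp, hh, h1, h2]
  have hmap : P.map (fun ω => X ω + Z ω) = uniform01.map h := by
    rw [Measure.map_congr hcomp,
      ← AEMeasurable.map_map_of_aemeasurable (hUlaw ▸ hhmeas) hU.aemeasurable, hUlaw]
  -- the bad set where h is not right-continuous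
  set B : Set ℝ := {t | t ∈ Set.Ioo (0:ℝ) 1 ∧ h t < sInf (h '' Set.Ioo t 1)} with hB
  have hBdd : ∀ t ∈ Set.Ioo (0:ℝ) 1, BddBelow (h '' Set.Ioo t 1) := by
    intro t ht
    refine ⟨h t, ?_⟩
    rintro y ⟨u, hu, rfl⟩
    exact hhm ht ⟨ht.1.trans hu.1, hu.2⟩ hu.1.le
  have hBc : B.Countable := by
    have hq : ∀ t ∈ B, ∃ q : ℚ, h t < (q : ℝ) ∧ (q : ℝ) < sInf (h '' Set.Ioo t 1) :=
      fun t ht => exists_rat_btwn ht.2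
    choose! q hq1 hq2 using hq
    have hkey : ∀ t1 ∈ B, ∀ t2 ∈ B, t1 < t2 → (q t1 : ℝ) < (q t2 : ℝ) := by
      intro t1 ht1 t2 ht2 h12
      have hmem : h t2 ∈ h '' Set.Ioo t1 1 :=
        Set.mem_image_of_mem h ⟨h12, ht2.1.2⟩
      have : sInf (h '' Set.Ioo t1 1) ≤ h t2 := csInf_le (hBdd t1 ht1.1) hmem
      exact lt_trans (lt_of_lt_of_le (hq2 t1 ht1) this) (hq1 t2 ht2)
    have hinj : Set.InjOn q B := by
      intro t1 ht1 t2 ht2 heq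
      rcases lt_trichotomy t1 t2 with hlt | heq' | hgt
      · exact absurd (hkey t1 ht1 t2 ht2 hlt) (by rw [heq]; exact lt_irrefl _)
      · exact heq'
      · exact absurd (hkey t2 ht2 t1 ht1 hgt) (by rw [heq]; exact lt_irrefl _)
    exact (Set.mapsTo_univ q B).countable_of_injOn hinj Set.countable_univ
  have hB0 : uniform01 B = 0 := by
    have hv : volume B = 0 := hBc.measure_zero _
    have : uniform01 B ≤ volume B := by
      rw [uniform01, Measure.restrict_apply' measurableSet_Ioo]
      exact measure_mono Set.inter_subset_left
    exact le_antisymm (hv ▸ this) zero_le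
  have hae1 : ∀ᵐ u ∂uniform01, u ∈ Set.Ioo (0:ℝ) 1 :=
    ae_restrict_mem measurableSet_Ioo
  have hae2 : ∀ᵐ u ∂uniform01, u ∉ B :=
    measure_eq_zero_iff_ae_notMem.mp hB0
  filter_upwards [hae1, hae2] with u hu hnB
  rw [hmap, quantile_map_uniform h hhm hhmeas hu]
  have hle : h u ≤ sInf (h '' Set.Ioo u 1) :=
    le_csInf ((Set.nonempty_Ioo.2 hu.2).image h) (by
      rintro y ⟨v, hv, rfl⟩
      exact hhm hu ⟨hu.1.trans hv.1, hv.2⟩ hv.1.le)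
  have hnlt : ¬ h u < sInf (h '' Set.Ioo u 1) := fun hlt => hnB ⟨hu, hlt⟩
  exact le_antisymm (not_lt.1 hnlt) hle
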